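/- arXiv:2110.00539 — 3 statements merged into one kernel-verified Lean document; each statement's English description precedes it below -/
import Mathlib

section
/- If f : D → ℝ^d has L1-sensitivity Δ (i.e., for all neighboring inputs x, x' differing in one entry, ‖f(x) − f(x')‖₁ ≤ Δ), then the Laplace mechanism that outputs f(x) + (Y₁,...,Y_d) with Y_i i.i.d. Laplace with scale Δ/ε is ε-differentially private: for any neighboring x, x' and any measurable set S, Pr[f(x)+Y ∈ S] ≤ e^ε · Pr[f(x')+Y ∈ S]. -/
open MeasureTheory Real

/-- The d-dimensional Laplace density with scale `b`. -/
noncomputable def lapDensity (d : ℕ) (b : ℝ) (y : Fin d → ℝ) : ℝ :=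
  ∏ i, (1 / (2 * b)) * Real.exp (-|y i| / b)

lemma lapDensity_eq (d : ℕ) (b : ℝ) (y : Fin d → ℝ) :
    lapDensity d b y = (1 / (2 * b)) ^ d * Real.exp (-(∑ i, |y i|) / b) := by
  unfold lapDensity
  rw [Finset.prod_mul_distrib, Finset.prod_const, Finset.card_univ, Fintype.card_fin]
  congr 1
  rw [← Real.exp_sum]
  congr 1
  rw [neg_div, Finset.sum_div, ← Finset.sum_neg_distrib]
  simp [neg_div]

lemma lapDensity_nonneg (d : ℕ) (b : ℝ) (hb : 0 < b) (y : Fin d → ℝ) :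
    0 ≤ lapDensity d b y := by
  unfold lapDensity
  exact Finset.prod_nonneg fun i _ => by positivity

lemma lapDensity_key (d : ℕ) (b : ℝ) (hb : 0 < b) (u v : Fin d → ℝ) :
    lapDensity d b u ≤ Real.exp ((∑ i, |u i - v i|) / b) * lapDensity d b v := by
  rw [lapDensity_eq, lapDensity_eq, mul_comm (Real.exp _), mul_assoc, ← Real.exp_add]
  have hc : (0:ℝ) ≤ (1 / (2 * b)) ^ d := by positivity
  apply mul_le_mul_of_nonneg_left _ hc
  apply Real.exp_le_exp.mpr
  rw [neg_div, neg_div, ← sub_eq_neg_add, div_sub_div_same, ← neg_div,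
    div_le_div_iff_of_pos_right hb, neg_le_sub_iff_le_add, ← Finset.sum_add_distrib]
  exact Finset.sum_le_sum fun i _ => by
    linarith [abs_sub_abs_le_abs_sub (v i) (u i), abs_sub_comm (v i) (u i)]

/-- The Laplace mechanism with noise scale `Δ/ε` applied to a query with
L1-sensitivity `Δ` is `ε`-differentially private. -/
theorem laplace_mechanism_dp {D : Type*} (Neighbor : D → D → Prop)
    (d : ℕ) (f : D → (Fin d → ℝ)) (Δ ε : ℝ) (hΔ : 0 < Δ) (hε : 0 < ε)
    (hsens : ∀ x x', Neighbor x x' → ∑ i, |f x i - f x' i| ≤ Δ)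
    (x x' : D) (hN : Neighbor x x')
    (S : Set (Fin d → ℝ)) (hS : MeasurableSet S) :
    ∫⁻ y in S, ENNReal.ofReal (lapDensity d (Δ / ε) (y - f x)) ∂volume ≤
      ENNReal.ofReal (Real.exp ε) *
        ∫⁻ y in S, ENNReal.ofReal (lapDensity d (Δ / ε) (y - f x')) ∂volume := by
  have hb : 0 < Δ / ε := div_pos hΔ hε
  have hpt : ∀ y : Fin d → ℝ,
      lapDensity d (Δ / ε) (y - f x) ≤ Real.exp ε * lapDensity d (Δ / ε) (y - f x') := by
    intro y
    refine (lapDensity_key d _ hb (y - f x) (y - f x')).trans ?_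
    apply mul_le_mul_of_nonneg_right _ (lapDensity_nonneg d _ hb _)
    apply Real.exp_le_exp.mpr
    have hsum : (∑ i, |(y - f x) i - (y - f x') i|) ≤ Δ := by
      have := hsens x x' hN
      calc (∑ i, |(y - f x) i - (y - f x') i|) = ∑ i, |f x i - f x' i| := by
            apply Finset.sum_congr rfl; intro i _
            simp [Pi.sub_apply, abs_sub_comm]
          _ ≤ Δ := this
    calc (∑ i, |(y - f x) i - (y - f x') i|) / (Δ / ε) ≤ Δ / (Δ / ε) := by
          gcongr
        _ = ε := by field_simp
  rw [← lintegral_const_mul' _ _ ENNReal.ofReal_ne_top]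
  apply lintegral_mono
  intro y
  show ENNReal.ofReal _ ≤ ENNReal.ofReal (Real.exp ε) * ENNReal.ofReal _
  rw [← ENNReal.ofReal_mul (Real.exp_nonneg ε)]
  exact ENNReal.ofReal_le_ofReal (hpt y)
end

section
/- Let f : D → ℝ^d have L2-sensitivity Δ₂ (‖f(x) − f(x')‖₂ ≤ Δ₂ for all neighboring x, x'). The mechanism that outputs f(x) + κ, where κ ∈ ℝ^d is drawn from the density p(κ) ∝ exp(−ε‖κ‖₂/Δ₂), is ε-differentially private. -/
open MeasureTheory Real

/-- The mechanism adding noise with density proportional to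
`exp (-ε ‖κ‖₂ / Δ₂)` to a query with L2-sensitivity `Δ₂` is
`ε`-differentially private. -/
theorem exponential_mechanism_dp {D : Type*} (Neighbor : D → D → Prop)
    (d : ℕ) (f : D → EuclideanSpace ℝ (Fin d)) (Δ ε C : ℝ)
    (hΔ : 0 < Δ) (hε : 0 < ε) (hC : 0 < C)
    (hsens : ∀ x x', Neighbor x x' → ‖f x - f x'‖ ≤ Δ)
    (x x' : D) (hN : Neighbor x x')
    (S : Set (EuclideanSpace ℝ (Fin d))) (hS : MeasurableSet S) :
    ∫⁻ y in S, ENNReal.ofReal (C * Real.exp (-(ε * ‖y - f x‖) / Δ)) ∂volume ≤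
      ENNReal.ofReal (Real.exp ε) *
        ∫⁻ y in S, ENNReal.ofReal (C * Real.exp (-(ε * ‖y - f x'‖) / Δ)) ∂volume := by
  rw [← lintegral_const_mul' _ _ ENNReal.ofReal_ne_top]
  refine lintegral_mono fun y => ?_
  rw [← ENNReal.ofReal_mul (Real.exp_pos ε).le]
  refine ENNReal.ofReal_le_ofReal ?_
  rw [mul_comm (Real.exp ε), mul_assoc, ← Real.exp_add]
  refine mul_le_mul_of_nonneg_left (Real.exp_le_exp.2 ?_) hC.le
  have h1 : ‖y - f x'‖ - ‖y - f x‖ ≤ ‖f x - f x'‖ := by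
    have := norm_sub_norm_le (y - f x') (y - f x)
    simpa [norm_sub_rev] using this
  have h2 := hsens x x' hN
  rw [div_eq_mul_inv, div_eq_mul_inv]
  nlinarith [mul_inv_cancel₀ hΔ.ne', inv_pos.2 hΔ, hε.le,
    mul_le_mul_of_nonneg_left (mul_le_mul_of_nonneg_right
      (sub_le_iff_le_add.1 (h1.trans h2)) (inv_pos.2 hΔ).le) hε.le]
end

section
/- Consider two sequences of gradient-descent iterates w_{t+1} = w_t − η ∇f_t(w_t) and w'_{t+1} = w'_t − η ∇f'_t(w'_t) started from the same point w_0 = w'_0, where at every step t the loss functions satisfy: each ∇f_t, ∇f'_t is the gradient of a convex, β-smooth function, η ≤ 2/β, each f_t and f'_t is L-Lipschitz, and f_t = f'_t for all but at most τ of the T steps. Then ‖w_T − w'_T‖ ≤ 2τLη. -/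
open Set
open scoped RealInnerProductSpace

section Aux

variable {E : Type*} [NormedAddCommGroup E] [InnerProductSpace ℝ E] [CompleteSpace E]

private lemma sgd_line_hasDerivAt (f : E → ℝ) (hdiff : Differentiable ℝ f) (u h : E) (t : ℝ) :
    HasDerivAt (fun s : ℝ => f (u + s • h)) ⟪gradient f (u + t • h), h⟫ t := by
  have hc : HasDerivAt (fun s : ℝ => u + s • h) h t := by
    simpa using ((hasDerivAt_id t).smul_const h).const_add u
  have hg : HasGradientAt f (gradient f (u + t • h)) (u + t • h) :=
    (hdiff _).hasGradientAt
  have hfd := hasGradientAt_iff_hasFDerivAt.mp hg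
  have := hfd.comp_hasDerivAt t hc
  simp only [InnerProductSpace.toDual_apply_apply] at this
  exact this

private lemma sgd_subgrad_ineq (f : E → ℝ) (hconv : ConvexOn ℝ Set.univ f)
    (hdiff : Differentiable ℝ f) (u v : E) :
    ⟪gradient f u, v - u⟫ ≤ f v - f u := by
  set φ : ℝ → ℝ := fun t => f (u + t • (v - u)) with hφ
  have hconvφ : ConvexOn ℝ Set.univ φ := by
    have h1 := hconv.comp_affineMap (AffineMap.lineMap u v)
    have key : (f ∘ (AffineMap.lineMap u v)) = φ := by
      funext t
      simp only [Function.comp_apply, hφ]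
      congr 1
      simp [AffineMap.lineMap_apply]
      abel
    rw [key] at h1
    simpa using h1
  have hder : HasDerivAt φ ⟪gradient f u, v - u⟫ 0 := by
    simpa using sgd_line_hasDerivAt f hdiff u (v - u) 0
  have := hconvφ.le_slope_of_hasDerivAt (mem_univ (0:ℝ)) (mem_univ (1:ℝ)) one_pos hder
  rw [slope_def_field] at this
  simpa [hφ] using this

private lemma sgd_descent_ineq (f : E → ℝ) {β : ℝ} (hβ : 0 ≤ β)
    (hdiff : Differentiable ℝ f) (hsmooth : LipschitzWith β.toNNReal (gradient f))
    (u v : E) :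
    f v ≤ f u + ⟪gradient f u, v - u⟫ + β / 2 * ‖v - u‖ ^ 2 := by
  set h : E := v - u with hh
  set g0 : ℝ := ⟪gradient f u, h⟫ with hg0
  set ψ : ℝ → ℝ := fun t => f (u + t • h) - t * g0 - β / 2 * t ^ 2 * ‖h‖ ^ 2 with hψ
  have hder : ∀ t : ℝ, HasDerivAt ψ
      (⟪gradient f (u + t • h), h⟫ - g0 - β * t * ‖h‖ ^ 2) t := by
    intro t
    have h1 := sgd_line_hasDerivAt f hdiff u h t
    have h2 : HasDerivAt (fun t : ℝ => t * g0) g0 t := by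
      simpa using (hasDerivAt_id t).mul_const g0
    have h3 : HasDerivAt (fun t : ℝ => β / 2 * t ^ 2 * ‖h‖ ^ 2) (β * t * ‖h‖ ^ 2) t := by
      have : HasDerivAt (fun t : ℝ => t ^ 2) (2 * t) t := by
        simpa using hasDerivAt_pow 2 t
      have := (this.const_mul (β / 2)).mul_const (‖h‖ ^ 2)
      exact this.congr_deriv (by ring)
    exact (h1.sub h2).sub h3
  have hψ'le : ∀ t ∈ Set.Ici (0:ℝ),
      ⟪gradient f (u + t • h), h⟫ - g0 - β * t * ‖h‖ ^ 2 ≤ 0 := by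
    intro t ht
    have hineq : ⟪gradient f (u + t • h), h⟫ - g0 =
        ⟪gradient f (u + t • h) - gradient f u, h⟫ := by
      rw [inner_sub_left]
    rw [hineq]
    have hcs := real_inner_le_norm (gradient f (u + t • h) - gradient f u) h
    have hlip : ‖gradient f (u + t • h) - gradient f u‖ ≤ β * (t * ‖h‖) := by
      have hd := hsmooth.dist_le_mul (u + t • h) u
      rw [dist_eq_norm, dist_eq_norm, add_sub_cancel_left] at hd
      calc ‖gradient f (u + t • h) - gradient f u‖ ≤ β.toNNReal * ‖t • h‖ := by
            simpa [dist_eq_norm] using hd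
        _ = β * (t * ‖h‖) := by
            rw [norm_smul, Real.coe_toNNReal _ hβ, Real.norm_eq_abs, abs_of_nonneg ht]
    nlinarith [norm_nonneg h, norm_nonneg (gradient f (u + t • h) - gradient f u)]
  have hanti : AntitoneOn ψ (Set.Ici (0:ℝ)) := by
    apply antitoneOn_of_deriv_nonpos (convex_Ici 0)
    · exact (Continuous.continuousOn (by
        have : Differentiable ℝ ψ := fun t => (hder t).differentiableAt
        exact this.continuous))
    · intro t ht
      exact ((hder t).differentiableAt).differentiableWithinAt
    · intro t ht
      rw [(hder t).deriv]
      exact hψ'le t (interior_subset ht)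
  have h01 := hanti (Set.self_mem_Ici) (Set.mem_Ici.mpr zero_le_one) zero_le_one
  simp only [hψ, zero_smul, add_zero, zero_mul, one_smul, one_pow, mul_one,
    zero_pow, sub_zero, one_mul] at h01
  have : u + h = v := by rw [hh]; abel
  rw [this] at h01
  linarith [h01]

private lemma sgd_half_coco (f : E → ℝ) {β : ℝ} (hβ : 0 < β)
    (hconv : ConvexOn ℝ Set.univ f) (hdiff : Differentiable ℝ f)
    (hsmooth : LipschitzWith β.toNNReal (gradient f)) (u v : E) :
    f u + ⟪gradient f u, v - u⟫ + 1 / (2 * β) * ‖gradient f v - gradient f u‖ ^ 2 ≤ f v := by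
  set D : E := gradient f v - gradient f u with hD
  set y : E := v - (1 / β) • D with hy
  have h1 := sgd_descent_ineq f hβ.le hdiff hsmooth v y
  have h2 := sgd_subgrad_ineq f hconv hdiff u y
  have e1 : ⟪gradient f v, y - v⟫ = -(1 / β) * ⟪gradient f v, D⟫ := by
    simp [hy, inner_smul_right, sub_sub_cancel_left]
  have e2 : ‖y - v‖ ^ 2 = (1 / β) ^ 2 * ‖D‖ ^ 2 := by
    have : y - v = -((1 / β) • D) := by rw [hy]; abel
    rw [this, norm_neg, norm_smul]
    simp [abs_of_nonneg (by positivity : (0:ℝ) ≤ 1 / β), mul_pow]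
  have e3 : ⟪gradient f u, y - u⟫ = ⟪gradient f u, v - u⟫ - (1 / β) * ⟪gradient f u, D⟫ := by
    have : y - u = (v - u) - (1 / β) • D := by rw [hy]; abel
    rw [this, inner_sub_right, inner_smul_right]
  have e4 : ⟪gradient f v, D⟫ - ⟪gradient f u, D⟫ = ‖D‖ ^ 2 := by
    rw [← inner_sub_left, ← hD, real_inner_self_eq_norm_sq]
  rw [e1, e2] at h1
  rw [e3] at h2
  have hA : β / 2 * ((1 / β) ^ 2 * ‖D‖ ^ 2) = 1 / (2 * β) * ‖D‖ ^ 2 := by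
    field_simp
  have hsub : 1 / β * ⟪gradient f u, D⟫ - 1 / β * ⟪gradient f v, D⟫
      = -(1 / β * ‖D‖ ^ 2) := by rw [← mul_sub, ← neg_sub (⟪gradient f v, D⟫)]; rw [e4]; ring
  have hhalf : 1 / β * ‖D‖ ^ 2 - 1 / (2 * β) * ‖D‖ ^ 2 = 1 / (2 * β) * ‖D‖ ^ 2 := by
    field_simp; ring
  linarith [h1, h2, hA, hsub, hhalf]

private lemma sgd_grad_step_nonexpansive (f : E → ℝ) {β : ℝ} (hβ : 0 < β) {η : ℝ}
    (hη0 : 0 ≤ η) (hηβ : η ≤ 2 / β)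
    (hconv : ConvexOn ℝ Set.univ f) (hdiff : Differentiable ℝ f)
    (hsmooth : LipschitzWith β.toNNReal (gradient f)) (x y : E) :
    ‖(x - η • gradient f x) - (y - η • gradient f y)‖ ≤ ‖x - y‖ := by
  set D : E := gradient f x - gradient f y with hD
  have hcoco : 1 / β * ‖D‖ ^ 2 ≤ ⟪x - y, D⟫ := by
    have h1 := sgd_half_coco f hβ hconv hdiff hsmooth x y
    have h2 := sgd_half_coco f hβ hconv hdiff hsmooth y x
    have e1 : ⟪gradient f x, y - x⟫ + ⟪gradient f y, x - y⟫ = -⟪x - y, D⟫ := by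
      have : y - x = -(x - y) := by abel
      rw [this, inner_neg_right, real_inner_comm D (x - y), hD, inner_sub_left]
      ring
    have e2 : ‖gradient f y - gradient f x‖ = ‖D‖ := by
      rw [hD, ← norm_neg]; congr 1; abel
    rw [e2] at h1
    rw [show ‖gradient f x - gradient f y‖ = ‖D‖ from rfl] at h2
    have h2c : 2 * (1 / (2 * β)) = 1 / β := by field_simp
    nlinarith [h1, h2, e1]
  have hexp : ‖(x - η • gradient f x) - (y - η • gradient f y)‖ ^ 2 ≤ ‖x - y‖ ^ 2 := by
    have ekey : (x - η • gradient f x) - (y - η • gradient f y) = (x - y) - η • D := by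
      rw [hD, smul_sub]; abel
    rw [ekey, norm_sub_sq_real, inner_smul_right, norm_smul, Real.norm_eq_abs,
      abs_of_nonneg hη0, mul_pow]
    have h4 : η * η ≤ η * (2 / β) := mul_le_mul_of_nonneg_left hηβ hη0
    have k1 : η * η * ‖D‖ ^ 2 ≤ η * (2 / β) * ‖D‖ ^ 2 :=
      mul_le_mul_of_nonneg_right h4 (sq_nonneg _)
    have k2 : 2 * η * (1 / β * ‖D‖ ^ 2) ≤ 2 * η * ⟪x - y, D⟫ :=
      mul_le_mul_of_nonneg_left hcoco (by positivity)
    have k3 : η * (2 / β) * ‖D‖ ^ 2 = 2 * η * (1 / β * ‖D‖ ^ 2) := by ring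
    nlinarith [k1, k2, k3]
  exact le_of_pow_le_pow_left₀ (two_ne_zero) (norm_nonneg _) hexp

private lemma sgd_grad_norm_le (f : E → ℝ) {L : NNReal}
    (hdiff : Differentiable ℝ f) (hlip : LipschitzWith L f) (x : E) :
    ‖gradient f x‖ ≤ L := by
  have h1 : ‖gradient f x‖ = ‖fderiv ℝ f x‖ := by
    rw [gradient, LinearIsometryEquiv.norm_map]
  rw [h1]
  exact norm_fderiv_le_of_lipschitz ℝ hlip

end Aux

/-- Sensitivity of permutation-based SGD: two gradient-descent trajectories
on per-step losses that agree in all but at most `τ` of the `T` steps, each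
loss being convex, `β`-smooth and `L`-Lipschitz, with step size `η ≤ 2/β`,
end up within distance `2 τ L η`. -/
theorem sgd_sensitivity (d : ℕ) (T τ : ℕ) (L β : NNReal) (η : ℝ)
    (hη0 : 0 ≤ η) (hηβ : η ≤ 2 / (β : ℝ))
    (f f' : ℕ → EuclideanSpace ℝ (Fin d) → ℝ)
    (w w' : ℕ → EuclideanSpace ℝ (Fin d))
    (hconv : ∀ t, ConvexOn ℝ Set.univ (f t))
    (hconv' : ∀ t, ConvexOn ℝ Set.univ (f' t))
    (hdiff : ∀ t, Differentiable ℝ (f t))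
    (hdiff' : ∀ t, Differentiable ℝ (f' t))
    (hlip : ∀ t, LipschitzWith L (f t))
    (hlip' : ∀ t, LipschitzWith L (f' t))
    (hsmooth : ∀ t, LipschitzWith β (gradient (f t)))
    (hsmooth' : ∀ t, LipschitzWith β (gradient (f' t)))
    (hinit : w 0 = w' 0)
    (hstep : ∀ t, w (t + 1) = w t - η • gradient (f t) (w t))
    (hstep' : ∀ t, w' (t + 1) = w' t - η • gradient (f' t) (w' t))
    (hdiffer : ∃ S : Finset ℕ, S.card ≤ τ ∧ ∀ t < T, t ∉ S → f t = f' t) :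
    ‖w T - w' T‖ ≤ 2 * τ * L * η := by
  have hRHS0 : (0:ℝ) ≤ 2 * τ * L * η := by positivity
  rcases eq_or_lt_of_le hη0 with hη | hηpos
  · -- η = 0 : trajectories are constant
    have hw : ∀ t, w t = w 0 := by
      intro t; induction t with
      | zero => rfl
      | succ n ih => rw [hstep n, ← hη]; simp [ih]
    have hw' : ∀ t, w' t = w' 0 := by
      intro t; induction t with
      | zero => rfl
      | succ n ih => rw [hstep' n, ← hη]; simp [ih]
    rw [hw T, hw' T, hinit, sub_self, norm_zero]
    exact hRHS0
  · -- η > 0, hence β > 0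
    have hβpos : (0:ℝ) < β := by
      rcases eq_or_lt_of_le β.coe_nonneg with h0 | h0
      · rw [← h0, div_zero] at hηβ; linarith
      · exact h0
    have hsm : ∀ t, LipschitzWith ((β:ℝ)).toNNReal (gradient (f t)) := by
      intro t; rw [Real.toNNReal_coe]; exact hsmooth t
    obtain ⟨S, hScard, hSeq⟩ := hdiffer
    have key : ∀ t, t ≤ T →
        ‖w t - w' t‖ ≤ 2 * L * η * ((Finset.range t ∩ S).card : ℝ) := by
      intro t
      induction t with
      | zero => intro _; simp [hinit]
      | succ n ih =>
        intro hn
        have hnT : n < T := hn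
        have ihn := ih hnT.le
        by_cases hmem : n ∈ S
        · -- differing step: triangle inequality with gradient bounds
          have hcard : ((Finset.range (n+1) ∩ S).card : ℝ)
              = ((Finset.range n ∩ S).card : ℝ) + 1 := by
            rw [Finset.range_add_one, Finset.insert_inter_of_mem hmem,
              Finset.card_insert_of_notMem (by simp)]
            push_cast; ring
          have hsplit : w (n+1) - w' (n+1)
              = (w n - w' n) + (η • gradient (f' n) (w' n) - η • gradient (f n) (w n)) := by
            rw [hstep n, hstep' n]; abel
          have hb1 : ‖η • gradient (f n) (w n)‖ ≤ η * L := by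
            rw [norm_smul, Real.norm_eq_abs, abs_of_nonneg hη0]
            exact mul_le_mul_of_nonneg_left
              (sgd_grad_norm_le (f n) (hdiff n) (hlip n) (w n)) hη0
          have hb2 : ‖η • gradient (f' n) (w' n)‖ ≤ η * L := by
            rw [norm_smul, Real.norm_eq_abs, abs_of_nonneg hη0]
            exact mul_le_mul_of_nonneg_left
              (sgd_grad_norm_le (f' n) (hdiff' n) (hlip' n) (w' n)) hη0
          calc ‖w (n+1) - w' (n+1)‖
              ≤ ‖w n - w' n‖ + ‖η • gradient (f' n) (w' n) - η • gradient (f n) (w n)‖ := by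
                rw [hsplit]; exact norm_add_le _ _
            _ ≤ ‖w n - w' n‖ + (‖η • gradient (f' n) (w' n)‖ + ‖η • gradient (f n) (w n)‖) := by
                gcongr; exact norm_sub_le _ _
            _ ≤ 2 * L * η * ((Finset.range n ∩ S).card : ℝ) + (η * L + η * L) := by
                gcongr
            _ = 2 * L * η * ((Finset.range (n+1) ∩ S).card : ℝ) := by
                rw [hcard]; ring
        · -- equal step: nonexpansiveness
          have hfe : f n = f' n := hSeq n hnT hmem
          have hne : ‖w (n+1) - w' (n+1)‖ ≤ ‖w n - w' n‖ := by
            rw [hstep n, hstep' n, ← hfe]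
            exact sgd_grad_step_nonexpansive (f n) hβpos hη0 hηβ (hconv n) (hdiff n)
              (hsm n) (w n) (w' n)
          refine hne.trans (ihn.trans ?_)
          have hsub : (Finset.range n ∩ S) ⊆ (Finset.range (n+1) ∩ S) := by
            apply Finset.inter_subset_inter_right
            exact Finset.range_subset_range.mpr (Nat.le_succ n)
          have := Finset.card_le_card hsub
          have hcast : ((Finset.range n ∩ S).card : ℝ)
              ≤ ((Finset.range (n+1) ∩ S).card : ℝ) := by exact_mod_cast this
          have h2Lη : (0:ℝ) ≤ 2 * L * η := by positivity
          exact mul_le_mul_of_nonneg_left hcast h2Lη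
    have hfinal := key T le_rfl
    have hcardT : ((Finset.range T ∩ S).card : ℝ) ≤ (τ : ℝ) := by
      have h1 : (Finset.range T ∩ S).card ≤ S.card :=
        Finset.card_le_card (Finset.inter_subset_right)
      exact_mod_cast h1.trans hScard
    calc ‖w T - w' T‖ ≤ 2 * L * η * ((Finset.range T ∩ S).card : ℝ) := hfinal
      _ ≤ 2 * L * η * τ := by
          have h2Lη : (0:ℝ) ≤ 2 * L * η := by positivity
          exact mul_le_mul_of_nonneg_left hcardT h2Lη
      _ = 2 * τ * L * η := by ring
end
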